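/- Let 𝔅 be the Jacobson radical of the standard principal hereditary order 𝔄 in M_n(ℚ_p) with parameter e. Then for every integer i ≥ 0 one has the inclusions of ℤ_p-submodules p^(⌈(i−1)/e⌉+1)·M_n(ℤ_p) ⊆ 𝔅^i ⊆ p^⌊i/e⌋·M_n(ℤ_p). -/

import Mathlib

open scoped Pointwise

noncomputable section

/-- The `ℤ_p`-submodule `p^k ℤ_p` of `ℚ_p`, for `k : ℤ`. -/
def pAdicLat (p : ℕ) [Fact p.Prime] (k : ℤ) : Submodule ℤ_[p] ℚ_[p] :=
  Submodule.span ℤ_[p] {(p : ℚ_[p]) ^ k}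

/-- The `ℤ_p`-submodule of `M_n(ℚ_p)` whose `(i,j)` entry lies in `p^(f i j) ℤ_p`. -/
def blockMod (p : ℕ) [Fact p.Prime] (n m₀ : ℕ) (f : Fin n → Fin n → ℤ) :
    Submodule ℤ_[p] (Matrix (Fin n) (Fin n) ℚ_[p]) where
  carrier := {x | ∀ i j, x i j ∈ pAdicLat p (f i j)}
  add_mem' := fun hx hy i j => add_mem (hx i j) (hy i j)
  zero_mem' := fun i j => zero_mem _
  smul_mem' := fun c x hx i j => Submodule.smul_mem _ c (hx i j)

/-- The standard principal hereditary order `𝔄` with parameter `e`, blocks of size `m₀`: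
entries of the `(a,b)` block (where `a = i/m₀`, `b = j/m₀`) lie in `ℤ_p` if `a ≤ b`
and in `pℤ_p` if `a > b`. -/
def stdOrder (p : ℕ) [Fact p.Prime] (n m₀ : ℕ) :
    Submodule ℤ_[p] (Matrix (Fin n) (Fin n) ℚ_[p]) :=
  blockMod p n m₀ (fun i j => if i.val / m₀ ≤ j.val / m₀ then 0 else 1)

/-- The Jacobson radical `𝔅` of the standard principal hereditary order:
entries of the `(a,b)` block lie in `ℤ_p` if `a < b` and in `pℤ_p` if `a ≥ b`. -/
def stdRadical (p : ℕ) [Fact p.Prime] (n m₀ : ℕ) :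
    Submodule ℤ_[p] (Matrix (Fin n) (Fin n) ℚ_[p]) :=
  blockMod p n m₀ (fun i j => if i.val / m₀ < j.val / m₀ then 0 else 1)

/-- Powers `𝔅^i` of the radical, with the convention `𝔅^0 = 𝔄`. -/
def radPow (p : ℕ) [Fact p.Prime] (n m₀ : ℕ) (i : ℕ) :
    Submodule ℤ_[p] (Matrix (Fin n) (Fin n) ℚ_[p]) :=
  if i = 0 then stdOrder p n m₀ else stdRadical p n m₀ ^ i

variable {p : ℕ} [Fact p.Prime]

lemma pcast_ne_zero : ((p : ℚ_[p])) ≠ 0 :=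
  Nat.cast_ne_zero.mpr (Fact.out : p.Prime).ne_zero

lemma zpow_mem_pAdicLat {k m : ℤ} (h : m ≤ k) : (p : ℚ_[p]) ^ k ∈ pAdicLat p m := by
  rw [pAdicLat, Submodule.mem_span_singleton]
  refine ⟨(p : ℤ_[p]) ^ (k - m).toNat, ?_⟩
  have h1 : (((p : ℤ_[p]) ^ (k - m).toNat : ℤ_[p]) : ℚ_[p]) = (p : ℚ_[p]) ^ ((k - m).toNat : ℤ) := by
    push_cast; rw [zpow_natCast]
  rw [Algebra.smul_def]
  show (((p : ℤ_[p]) ^ (k - m).toNat : ℤ_[p]) : ℚ_[p]) * _ = _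
  rw [h1, Int.toNat_of_nonneg (by omega), ← zpow_add₀ pcast_ne_zero]
  ring_nf

lemma pAdicLat_mono {k m : ℤ} (h : m ≤ k) : pAdicLat p k ≤ pAdicLat p m := by
  rw [pAdicLat, Submodule.span_le, Set.singleton_subset_iff]
  exact zpow_mem_pAdicLat h

lemma pAdicLat_mul {x y : ℚ_[p]} {k m : ℤ} (hx : x ∈ pAdicLat p k) (hy : y ∈ pAdicLat p m) :
    x * y ∈ pAdicLat p (k + m) := by
  rw [pAdicLat, Submodule.mem_span_singleton] at hx hy ⊢
  obtain ⟨a, rfl⟩ := hx; obtain ⟨b, rfl⟩ := hy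
  exact ⟨a * b, by rw [smul_mul_smul_comm, zpow_add₀ pcast_ne_zero]⟩

lemma mem_blockMod_iff {n m₀ : ℕ} {f : Fin n → Fin n → ℤ} {x : Matrix (Fin n) (Fin n) ℚ_[p]} :
    x ∈ blockMod p n m₀ f ↔ ∀ i j, x i j ∈ pAdicLat p (f i j) := Iff.rfl

lemma blockMod_mono {n m₀ : ℕ} {f g : Fin n → Fin n → ℤ} (h : ∀ i j, g i j ≤ f i j) :
    blockMod p n m₀ f ≤ blockMod p n m₀ g :=
  fun _ hx i j => pAdicLat_mono (h i j) (hx i j)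

lemma blockMod_mul {n m₀ : ℕ} {f g h : Fin n → Fin n → ℤ} (hh : ∀ i k j, h i j ≤ f i k + g k j) :
    blockMod p n m₀ f * blockMod p n m₀ g ≤ blockMod p n m₀ h := by
  rw [Submodule.mul_le]
  intro x hx y hy i j
  rw [mem_blockMod_iff] at hx hy
  show (x * y) i j ∈ _
  rw [Matrix.mul_apply]
  exact sum_mem fun k _ => pAdicLat_mono (hh i k j) (pAdicLat_mul (hx i k) (hy k j))

lemma stdBasis_mem_blockMod {n m₀ : ℕ} {f : Fin n → Fin n → ℤ} {a b : Fin n} {x : ℚ_[p]}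
    (hx : x ∈ pAdicLat p (f a b)) : Matrix.single a b x ∈ blockMod p n m₀ f := by
  intro i j
  simp only [Matrix.single, Matrix.of_apply]
  split_ifs with h
  · obtain ⟨rfl, rfl⟩ := h; exact hx
  · exact zero_mem _

section main

variable {n e m₀ : ℕ}

lemma blk_lt (hm : 0 < m₀) (hn : n = e * m₀) (a : Fin n) : a.val / m₀ < e :=
  (Nat.div_lt_iff_lt_mul hm).mpr (by omega)

/-- The key lower-bound construction: an elementary matrix with a `p`-power entry of
exponent at least `⌈(i + blk a - blk b)/e⌉` lies in `𝔅^i` (here `i+1 ≥ 1`). -/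
lemma stdBasis_zpow_mem_radPow (he : 0 < e) (hm : 0 < m₀) (hn : n = e * m₀)
    (i : ℕ) (a b : Fin n) (w : ℤ)
    (hw : ⌈((i : ℚ) + 1 + ((a.val / m₀ : ℕ) : ℚ) - ((b.val / m₀ : ℕ) : ℚ)) / (e : ℚ)⌉ ≤ w) :
    Matrix.single a b ((p : ℚ_[p]) ^ w) ∈ stdRadical p n m₀ ^ (i + 1) := by
  have he' : (0 : ℚ) < e := by exact_mod_cast he
  induction i generalizing a w with
  | zero =>
    rw [pow_one, stdRadical]
    apply stdBasis_mem_blockMod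
    apply zpow_mem_pAdicLat
    have hα : a.val / m₀ < e := blk_lt hm hn a
    have hβ : b.val / m₀ < e := blk_lt hm hn b
    have hαQ : ((a.val / m₀ : ℕ) : ℚ) < e := by exact_mod_cast hα
    have hβQ : ((b.val / m₀ : ℕ) : ℚ) < e := by exact_mod_cast hβ
    split_ifs with h
    · -- blk a < blk b : need 0 ≤ w
      refine le_trans ?_ hw
      rw [Int.le_ceil_iff]
      push_cast
      rw [lt_div_iff₀ he']
      linarith
    · -- need 1 ≤ w
      have h' : ((b.val / m₀ : ℕ) : ℚ) ≤ ((a.val / m₀ : ℕ) : ℚ) := by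
        exact_mod_cast Nat.le_of_not_lt h
      refine le_trans ?_ hw
      rw [Int.le_ceil_iff]
      push_cast
      rw [lt_div_iff₀ he']
      linarith
  | succ i ih =>
    have hα : a.val / m₀ < e := blk_lt hm hn a
    set α := a.val / m₀ with hαdef
    set γ := (α + 1) % e with hγdef
    have hγe : γ < e := Nat.mod_lt _ he
    have hk : γ * m₀ < n := by
      rw [hn]; exact Nat.mul_lt_mul_of_lt_of_le hγe le_rfl hm
    set k : Fin n := ⟨γ * m₀, hk⟩ with hkdef
    have hkb : k.val / m₀ = γ := Nat.mul_div_cancel _ hm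
    set w₁ : ℤ := if α < γ then 0 else 1 with hw₁def
    -- first factor lies in the radical
    have hA : Matrix.single a k ((p : ℚ_[p]) ^ w₁) ∈ stdRadical p n m₀ := by
      rw [stdRadical]
      apply stdBasis_mem_blockMod
      apply zpow_mem_pAdicLat
      rw [hkb]
    -- inequality for the second factor
    have hB : ⌈((i : ℚ) + 1 + ((k.val / m₀ : ℕ) : ℚ) - ((b.val / m₀ : ℕ) : ℚ)) / (e : ℚ)⌉
        ≤ w - w₁ := by
      rw [hkb]
      by_cases hcase : α + 1 < e
      · have hγeq : γ = α + 1 := Nat.mod_eq_of_lt hcase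
        have hw₁0 : w₁ = 0 := by rw [hw₁def, if_pos (by omega)]
        rw [hw₁0, sub_zero]
        refine le_trans (le_of_eq ?_) hw
        congr 1
        rw [hγeq]
        push_cast
        ring
      · have hae : α + 1 = e := by omega
        have hγ0 : γ = 0 := by rw [hγdef, hae, Nat.mod_self]
        have hw₁1 : w₁ = 1 := by rw [hw₁def, if_neg (by omega)]
        have hc : (α : ℚ) + 1 = e := by exact_mod_cast hae
        have key : ((i : ℚ) + 1 + 1 + (α : ℚ) - ((b.val / m₀ : ℕ) : ℚ)) / (e : ℚ)
            = ((i : ℚ) + 1 + ((γ : ℕ) : ℚ) - ((b.val / m₀ : ℕ) : ℚ)) / (e : ℚ) + 1 := by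
          rw [hγ0]
          push_cast
          field_simp
          ring_nf
          linarith
        push_cast at hw
        rw [show ((i : ℚ) + 1 + 1 + (α : ℚ) - ((b.val / m₀ : ℕ) : ℚ))
            = ((i : ℚ) + 1) + 1 + (α : ℚ) - ((b.val / m₀ : ℕ) : ℚ) from by ring] at key
        rw [key, Int.ceil_add_one] at hw
        rw [hw₁1]
        omega
    have hprod : Matrix.single a b ((p : ℚ_[p]) ^ w)
        = Matrix.single a k ((p : ℚ_[p]) ^ w₁)
          * Matrix.single k b ((p : ℚ_[p]) ^ (w - w₁)) := by
      rw [Matrix.single_mul_single_same, ← zpow_add₀ pcast_ne_zero]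
      congr 1
      ring
    rw [hprod, pow_succ']
    exact Submodule.mul_mem_mul hA (ih k (w - w₁) hB)


/-- Upper bound: `𝔅^(i+1) ⊆ blockMod ν_{i+1}`. -/
lemma radPow_le_nu (he : 0 < e) (hm : 0 < m₀) (hn : n = e * m₀) (i : ℕ) :
    stdRadical p n m₀ ^ (i + 1) ≤ blockMod p n m₀
      (fun a b => ⌈((i : ℚ) + 1 + ((a.val / m₀ : ℕ) : ℚ) - ((b.val / m₀ : ℕ) : ℚ)) / (e : ℚ)⌉) := by
  have he' : (0 : ℚ) < e := by exact_mod_cast he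
  induction i with
  | zero =>
    rw [pow_one, stdRadical]
    apply blockMod_mono
    intro a b
    have hα : ((a.val / m₀ : ℕ) : ℚ) + 1 ≤ e := by exact_mod_cast blk_lt hm hn a
    split_ifs with h
    · have h' : ((a.val / m₀ : ℕ) : ℚ) + 1 ≤ ((b.val / m₀ : ℕ) : ℚ) := by exact_mod_cast h
      rw [Int.ceil_le]
      push_cast
      rw [div_le_iff₀ he']
      linarith
    · rw [Int.ceil_le]
      push_cast
      rw [div_le_iff₀ he']
      have hβ : (0 : ℚ) ≤ ((b.val / m₀ : ℕ) : ℚ) := by positivity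
      linarith
  | succ i ih =>
    rw [pow_succ]
    refine le_trans (mul_le_mul' ih le_rfl) ?_
    rw [stdRadical]
    apply blockMod_mul
    intro a k b
    have hγ : ((k.val / m₀ : ℕ) : ℚ) + 1 ≤ e := by exact_mod_cast blk_lt hm hn k
    split_ifs with h
    · have h' : ((k.val / m₀ : ℕ) : ℚ) + 1 ≤ ((b.val / m₀ : ℕ) : ℚ) := by exact_mod_cast h
      rw [add_zero]
      apply Int.ceil_mono
      rw [div_le_div_iff_of_pos_right he']
      push_cast
      linarith
    · have hβ : (0 : ℚ) ≤ ((b.val / m₀ : ℕ) : ℚ) := by positivity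
      have harg : ((i : ℚ) + 1 + 1 + ((a.val / m₀ : ℕ) : ℚ) - ((b.val / m₀ : ℕ) : ℚ)) / (e : ℚ)
          ≤ ((i : ℚ) + 1 + ((a.val / m₀ : ℕ) : ℚ) - ((k.val / m₀ : ℕ) : ℚ)) / (e : ℚ) + 1 := by
        rw [div_le_iff₀ he', add_mul, one_mul, div_mul_cancel₀ _ (ne_of_gt he')]
        linarith
      simp only [Nat.cast_add, Nat.cast_one]
      calc ⌈((i : ℚ) + 1 + 1 + ((a.val / m₀ : ℕ) : ℚ) - ((b.val / m₀ : ℕ) : ℚ)) / (e : ℚ)⌉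
          ≤ ⌈((i : ℚ) + 1 + ((a.val / m₀ : ℕ) : ℚ) - ((k.val / m₀ : ℕ) : ℚ)) / (e : ℚ) + 1⌉ :=
            Int.ceil_mono harg
        _ = _ + 1 := Int.ceil_add_one _

/-- `p^(⌈(i−1)/e⌉+1)·M_n(ℤ_p) ⊆ 𝔅^i ⊆ p^⌊i/e⌋·M_n(ℤ_p)` for all `i ≥ 0`. -/
theorem radPow_approximation (p : ℕ) [Fact p.Prime] (n e m₀ : ℕ)
    (he : 0 < e) (hm : 0 < m₀) (hn : n = e * m₀) (i : ℕ) :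
    blockMod p n m₀ (fun _ _ => ⌈((i : ℚ) - 1) / (e : ℚ)⌉ + 1) ≤ radPow p n m₀ i ∧
      radPow p n m₀ i ≤ blockMod p n m₀ (fun _ _ => ⌊(i : ℚ) / (e : ℚ)⌋) := by
  have he' : (0 : ℚ) < e := by exact_mod_cast he
  have he1 : (1 : ℚ) ≤ e := by exact_mod_cast he
  rcases Nat.eq_zero_or_pos i with rfl | hi
  · rw [radPow, if_pos rfl, stdOrder]
    constructor
    · apply blockMod_mono
      intro a b
      simp only [Nat.cast_zero]
      have hB1 : (-1 : ℤ) ≤ ⌈((0 : ℚ) - 1) / (e : ℚ)⌉ := by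
        rw [Int.le_ceil_iff]
        push_cast
        rw [lt_div_iff₀ he']
        linarith
      split_ifs with h
      · omega
      · have h2 : 2 ≤ e :=
          Nat.lt_of_le_of_lt (Nat.lt_of_le_of_lt (Nat.zero_le _) (Nat.lt_of_not_le h))
            (blk_lt hm hn a)
        have h2' : (2 : ℚ) ≤ e := by exact_mod_cast h2
        have hB2 : (0 : ℤ) ≤ ⌈((0 : ℚ) - 1) / (e : ℚ)⌉ := by
          rw [Int.le_ceil_iff]
          push_cast
          rw [lt_div_iff₀ he']
          linarith
        omega
    · apply blockMod_mono
      intro a b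
      simp only [Nat.cast_zero, zero_div, Int.floor_zero]
      split_ifs <;> omega
  · obtain ⟨j, rfl⟩ : ∃ j, i = j + 1 := ⟨i - 1, by omega⟩
    rw [radPow, if_neg (by omega)]
    constructor
    · -- lower bound
      intro x hx
      rw [Matrix.matrix_eq_sum_single x]
      refine sum_mem fun a _ => sum_mem fun b _ => ?_
      obtain ⟨u, hu⟩ := Submodule.mem_span_singleton.1 (hx a b)
      rw [← hu, ← Matrix.smul_single]
      refine Submodule.smul_mem _ _ (stdBasis_zpow_mem_radPow he hm hn j a b _ ?_)
      have hα : ((a.val / m₀ : ℕ) : ℚ) + 1 ≤ e := by exact_mod_cast blk_lt hm hn a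
      have hβ : (0 : ℚ) ≤ ((b.val / m₀ : ℕ) : ℚ) := by positivity
      have harg : ((j : ℚ) + 1 + ((a.val / m₀ : ℕ) : ℚ) - ((b.val / m₀ : ℕ) : ℚ)) / (e : ℚ)
          ≤ ((j : ℚ) + 1 - 1) / (e : ℚ) + 1 := by
        rw [div_le_iff₀ he', add_mul, one_mul, div_mul_cancel₀ _ (ne_of_gt he')]
        linarith
      simp only [Nat.cast_add, Nat.cast_one]
      calc ⌈((j : ℚ) + 1 + ((a.val / m₀ : ℕ) : ℚ) - ((b.val / m₀ : ℕ) : ℚ)) / (e : ℚ)⌉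
          ≤ ⌈((j : ℚ) + 1 - 1) / (e : ℚ) + 1⌉ := Int.ceil_mono harg
        _ = _ + 1 := Int.ceil_add_one _
    · -- upper bound
      refine le_trans (radPow_le_nu he hm hn j) (blockMod_mono fun a b => ?_)
      rw [Int.le_ceil_iff]
      have hβ : ((b.val / m₀ : ℕ) : ℚ) + 1 ≤ e := by exact_mod_cast blk_lt hm hn b
      have hα : (0 : ℚ) ≤ ((a.val / m₀ : ℕ) : ℚ) := by positivity
      have hf : (⌊((j : ℚ) + 1) / (e : ℚ)⌋ : ℚ) * e ≤ (j : ℚ) + 1 := by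
        rw [← le_div_iff₀ he']
        exact Int.floor_le _
      push_cast
      push_cast at hf
      rw [lt_div_iff₀ he']
      nlinarith
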